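/- Let p ≥ 1 be an integer and (λ_k)_{k∈ℕ} a sequence of positive real numbers with Σ_k λ_k^{−p} < ∞, and set λ₀ = inf_k λ_k > 0. Then for every z ∈ ℂ with |z| < λ₀, Π_k [(1 + z/λ_k) exp( Σ_{n=1}^{p−1} (−1)^n n^{−1} (z/λ_k)^n )] = exp( Σ_{n=p}^{∞} (−1)^{n+1} n^{−1} z^n · (Σ_k λ_k^{−n}) ), where all the series involved converge absolutely. -/

import Mathlib

/-- Let `p ≥ 1` be an integer and `(λ_k)` a sequence of positive reals with
`Σ_k λ_k^(−p) < ∞`, and set `λ₀ = inf_k λ_k > 0`. Then for every `z ∈ ℂ` with `|z| < λ₀`,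
`Π_k [(1 + z/λ_k) exp (Σ_{n=1}^{p−1} (−1)^n n⁻¹ (z/λ_k)^n)]
  = exp (Σ_{n=p}^∞ (−1)^{n+1} n⁻¹ z^n (Σ_k λ_k^{−n}))`,
where all the series involved converge absolutely. -/
theorem stmt7 (p : ℕ) (hp : 1 ≤ p) (lam : ℕ → ℝ) (hpos : ∀ k, 0 < lam k)
    (hsum : Summable fun k => (lam k) ^ (-(p : ℤ)))
    (hinf : 0 < ⨅ k, lam k) :
    ∀ z : ℂ, ‖z‖ < ⨅ k, lam k →
      (∀ n : ℕ, p ≤ n → Summable fun k => (lam k) ^ (-(n : ℤ))) ∧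
      Summable (fun n : {n : ℕ // p ≤ n} =>
        ‖((-1 : ℂ) ^ ((n : ℕ) + 1) * ((n : ℕ) : ℂ)⁻¹ * z ^ (n : ℕ) *
          ((∑' k, (lam k) ^ (-((n : ℕ) : ℤ)) : ℝ) : ℂ))‖) ∧
      (∏' k, (1 + z / (lam k : ℂ)) *
          Complex.exp (∑ n ∈ Finset.Icc 1 (p - 1), (-1 : ℂ) ^ n * (n : ℂ)⁻¹ * (z / (lam k : ℂ)) ^ n))
        = Complex.exp (∑' n : {n : ℕ // p ≤ n},
            (-1 : ℂ) ^ ((n : ℕ) + 1) * ((n : ℕ) : ℂ)⁻¹ * z ^ (n : ℕ) *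
              ((∑' k, (lam k) ^ (-((n : ℕ) : ℤ)) : ℝ) : ℂ)) := by
  intro z hz
  set l0 : ℝ := ⨅ k, lam k with hl0
  have hbdd : BddBelow (Set.range lam) := ⟨0, by rintro x ⟨k, rfl⟩; exact (hpos k).le⟩
  have hle : ∀ k, l0 ≤ lam k := fun k => ciInf_le hbdd k
  set r : ℝ := ‖z‖ / l0 with hr
  have hr0 : 0 ≤ r := div_nonneg (norm_nonneg z) hinf.le
  have hr1 : r < 1 := (div_lt_one hinf).mpr hz
  -- pointwise key inequality
  have hkey : ∀ (n : ℕ), p ≤ n → ∀ k,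
      (lam k) ^ (-(n:ℤ)) ≤ (l0 ^ (n-p))⁻¹ * (lam k) ^ (-(p:ℤ)) := by
    intro n hn k
    have h1 : (lam k) ^ (-(n:ℤ)) = ((lam k) ^ (n-p))⁻¹ * (lam k) ^ (-(p:ℤ)) := by
      rw [← zpow_natCast (lam k) (n-p), ← zpow_neg, ← zpow_add₀ (hpos k).ne']
      congr 1
      omega
    rw [h1]
    gcongr
    · exact zpow_nonneg (hpos k).le _
    · exact hle k
  -- Part A
  have partA : ∀ n : ℕ, p ≤ n → Summable fun k => (lam k) ^ (-(n : ℤ)) := by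
    intro n hn
    exact (hsum.mul_left ((l0 ^ (n-p))⁻¹)).of_nonneg_of_le
      (fun k => zpow_nonneg (hpos k).le _) (hkey n hn)
  -- S n and bounds
  set S : ℕ → ℝ := fun n => ∑' k, (lam k) ^ (-(n:ℤ)) with hS
  have hSnn : ∀ n, 0 ≤ S n := fun n => tsum_nonneg fun k => zpow_nonneg (hpos k).le _
  have hSle : ∀ n : ℕ, p ≤ n → S n ≤ (l0 ^ (n-p))⁻¹ * S p := by
    intro n hn
    calc S n ≤ ∑' k, (l0 ^ (n-p))⁻¹ * (lam k) ^ (-(p:ℤ)) :=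
          Summable.tsum_le_tsum (hkey n hn) (partA n hn) (hsum.mul_left _)
      _ = (l0 ^ (n-p))⁻¹ * S p := hsum.tsum_mul_left _
  set C : ℝ := S p * l0 ^ p with hC
  -- the abs of the n-th coefficient
  have habsval : ∀ n : ℕ,
      ‖((-1 : ℂ) ^ (n + 1) * ((n : ℕ) : ℂ)⁻¹ * z ^ n * ((S n : ℝ) : ℂ))‖
        = ((n:ℝ))⁻¹ * (‖z‖) ^ n * S n := by
    intro n
    rw [norm_mul, norm_mul, norm_mul, norm_pow, norm_pow, norm_inv]
    simp [Complex.norm_natCast, Complex.norm_real, abs_of_nonneg (hSnn n)]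
  have hbound : ∀ n : ℕ, p ≤ n → ((n:ℝ))⁻¹ * (‖z‖) ^ n * S n ≤ C * r ^ n := by
    intro n hn
    have h1 : ((n:ℝ))⁻¹ ≤ 1 := by
      have : (1:ℝ) ≤ (n:ℝ) := by exact_mod_cast hp.trans hn
      exact inv_le_one_of_one_le₀ this
    have h2 : ((n:ℝ))⁻¹ * (‖z‖) ^ n * S n ≤ (‖z‖) ^ n * ((l0 ^ (n-p))⁻¹ * S p) := by
      calc ((n:ℝ))⁻¹ * (‖z‖) ^ n * S n ≤ 1 * (‖z‖) ^ n * ((l0 ^ (n-p))⁻¹ * S p) := by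
            gcongr
            · exact hSnn n
            · exact hSle n hn
        _ = (‖z‖) ^ n * ((l0 ^ (n-p))⁻¹ * S p) := by ring
    refine h2.trans (le_of_eq ?_)
    have hln : l0 ^ p * l0 ^ (n - p) = l0 ^ n := by
      rw [← pow_add]; congr 1; omega
    have hl0n : (l0:ℝ) ^ n ≠ 0 := (pow_pos hinf n).ne'
    have hl0np : (l0:ℝ) ^ (n-p) ≠ 0 := (pow_pos hinf (n-p)).ne'
    rw [hC, hr, div_pow]
    field_simp
    rw [← hln]
    ring
  -- Part B
  have partB : Summable (fun n : {n : ℕ // p ≤ n} =>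
      ‖((-1 : ℂ) ^ ((n : ℕ) + 1) * ((n : ℕ) : ℂ)⁻¹ * z ^ (n : ℕ) *
        ((S (n:ℕ) : ℝ) : ℂ))‖) := by
    refine Summable.of_nonneg_of_le (fun n => norm_nonneg _)
      (fun n => ?_) (((summable_geometric_of_lt_one hr0 hr1).mul_left C).subtype _)
    rw [habsval]
    exact hbound _ n.2
  refine ⟨partA, partB, ?_⟩
  -- Part C
  set w : ℕ → ℂ := fun k => z / (lam k : ℂ) with hwdef
  have hlamC : ∀ k, ((lam k : ℂ)) ≠ 0 := fun k => by exact_mod_cast (hpos k).ne'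
  have hwn : ∀ k, ‖w k‖ < 1 := by
    intro k
    rw [hwdef]
    simp only [norm_div, Complex.norm_real, Real.norm_eq_abs,
      abs_of_pos (hpos k)]
    rw [div_lt_one (hpos k)]
    exact lt_of_lt_of_le hz (hle k)
  have h1w : ∀ k, (1 : ℂ) + w k ≠ 0 := by
    intro k h
    have hwk : w k = -1 := by linear_combination h
    have : ‖w k‖ = 1 := by rw [hwk]; simp
    exact absurd (this ▸ hwn k) (lt_irrefl 1)
  set F2 : {n : ℕ // p ≤ n} × ℕ → ℂ := fun x =>
    (-1 : ℂ) ^ ((x.1 : ℕ) + 1) * ((x.1 : ℕ) : ℂ)⁻¹ * z ^ (x.1 : ℕ) *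
      ((lam x.2 : ℂ)) ^ (-((x.1 : ℕ) : ℤ)) with hF2def
  have hterm : ∀ (k n : ℕ), (-1 : ℂ) ^ (n + 1) * ((n : ℕ) : ℂ)⁻¹ * z ^ n *
      ((lam k : ℂ)) ^ (-(n : ℤ)) = (-1 : ℂ) ^ (n + 1) * (w k) ^ n / n := by
    intro k n
    rw [zpow_neg, zpow_natCast, hwdef]
    rw [div_pow, div_eq_mul_inv, div_eq_mul_inv]
    ring
  have hF2norm : ∀ x : {n : ℕ // p ≤ n} × ℕ,
      ‖F2 x‖ = (((x.1 : ℕ) : ℝ)⁻¹ * (‖z‖) ^ (x.1 : ℕ)) *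
        (lam x.2) ^ (-((x.1 : ℕ) : ℤ)) := by
    intro x
    rw [hF2def]
    simp only [norm_mul, norm_pow, norm_inv, norm_neg, norm_one, one_pow, one_mul,
      Complex.norm_natCast, norm_zpow, Complex.norm_real, Real.norm_eq_abs,
      abs_of_pos (hpos x.2)]
  have hN : Summable fun x : {n : ℕ // p ≤ n} × ℕ => ‖F2 x‖ := by
    rw [summable_prod_of_nonneg (fun x => norm_nonneg _)]
    constructor
    · intro n
      simp_rw [hF2norm]
      exact (partA n n.2).mul_left _
    · have hcoln : ∀ n : {n : ℕ // p ≤ n}, (∑' k, ‖F2 (n, k)‖)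
          = ((n : ℕ) : ℝ)⁻¹ * (‖z‖) ^ (n : ℕ) * S (n : ℕ) := by
        intro n
        simp_rw [hF2norm]
        rw [(partA n n.2).tsum_mul_left]
      apply Summable.congr partB
      intro n
      rw [hcoln, habsval]
  have hF2S : Summable F2 := hN.of_norm
  set g : ℕ → ℂ := fun k => ∑' n : {n : ℕ // p ≤ n}, F2 (n, k) with hgdef
  have hgsum : Summable g := hF2S.prod_symm.prod
  have htsumg : ∑' k, g k = ∑' n : {n : ℕ // p ≤ n}, ∑' k, F2 (n, k) :=
    Summable.tsum_comm (f := fun (n : {n : ℕ // p ≤ n}) (k : ℕ) => F2 (n, k)) hF2S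
  have hcol : ∀ n : {n : ℕ // p ≤ n}, (∑' k, F2 (n, k)) =
      (-1 : ℂ) ^ ((n : ℕ) + 1) * ((n : ℕ) : ℂ)⁻¹ * z ^ (n : ℕ) * ((S (n : ℕ) : ℝ) : ℂ) := by
    intro n
    have h1 : ∀ k, F2 (n, k) = ((-1 : ℂ) ^ ((n : ℕ) + 1) * ((n : ℕ) : ℂ)⁻¹ * z ^ (n : ℕ)) *
        ((lam k : ℂ)) ^ (-((n : ℕ) : ℤ)) := fun k => by rw [hF2def]
    rw [tsum_congr h1, tsum_mul_left]
    congr 1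
    rw [Complex.ofReal_tsum]
    exact tsum_congr fun k => (Complex.ofReal_zpow _ _).symm
  -- per-k identity
  have hFk : ∀ k, (1 + w k) * Complex.exp
      (∑ n ∈ Finset.Icc 1 (p - 1), (-1 : ℂ) ^ n * (n : ℂ)⁻¹ * (w k) ^ n)
      = Complex.exp (g k) := by
    intro k
    set tt : ℕ → ℂ := fun n => (-1 : ℂ) ^ (n + 1) * (w k) ^ n / n with htt
    have hfull : HasSum tt (Complex.log (1 + w k)) :=
      Complex.hasSum_taylorSeries_log (hwn k)
    have hsmm : Summable tt := hfull.summable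
    have hsplit : (∑ n ∈ Finset.range p, tt n)
        + (∑' n : {n : ℕ // p ≤ n}, tt (n : ℕ)) = Complex.log (1 + w k) := by
      have h2 := Summable.tsum_add_tsum_compl (s := ((Finset.range p : Finset ℕ) : Set ℕ))
        (hsmm.subtype _) (hsmm.subtype _)
      rw [← hfull.tsum_eq, ← h2]
      congr 1
      · exact (Finset.tsum_subtype (Finset.range p) tt).symm
      · exact ((Equiv.subtypeEquivRight (q := fun n : ℕ => p ≤ n) (fun n => by
            simp [Set.mem_compl_iff, Finset.mem_coe, Finset.mem_range, not_lt])).tsum_eq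
            (fun n : {n : ℕ // p ≤ n} => tt (n : ℕ))).symm
    have hgkt : g k = ∑' n : {n : ℕ // p ≤ n}, tt (n : ℕ) :=
      tsum_congr fun n => hterm k (n : ℕ)
    have hgk : g k = Complex.log (1 + w k) - ∑ n ∈ Finset.range p, tt n := by
      rw [hgkt, ← hsplit]; ring
    have hranges : ∑ n ∈ Finset.Icc 1 (p - 1), (-1 : ℂ) ^ n * (n : ℂ)⁻¹ * (w k) ^ n
        = -∑ n ∈ Finset.range p, tt n := by
      have hIcc : Finset.Icc 1 (p - 1) = Finset.Ico 1 p := by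
        rw [← Finset.Ico_add_one_right_eq_Icc]
        congr 1
        omega
      have h0 : ∑ n ∈ Finset.range p, tt n = ∑ n ∈ Finset.Ico 1 p, tt n := by
        rw [Finset.range_eq_Ico, Finset.sum_eq_sum_Ico_succ_bot hp]
        have : tt 0 = 0 := by simp [htt]
        rw [this, zero_add]
      rw [hIcc, h0, ← Finset.sum_neg_distrib]
      refine Finset.sum_congr rfl fun n _ => ?_
      rw [htt]
      simp only [pow_succ]
      field_simp
    rw [hranges, hgk, Complex.exp_sub, Complex.exp_log (h1w k), Complex.exp_neg,
      div_eq_mul_inv]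
  -- conclude
  have hL : (∏' k, (1 + z / (lam k : ℂ)) * Complex.exp
      (∑ n ∈ Finset.Icc 1 (p - 1), (-1 : ℂ) ^ n * (n : ℂ)⁻¹ * (z / (lam k : ℂ)) ^ n))
      = Complex.exp (∑' k, g k) := by
    refine (tprod_congr (fun k => ?_)).trans (hgsum.hasSum.cexp).tprod_eq
    exact hFk k
  rw [hL, htsumg]
  exact congrArg Complex.exp (tsum_congr hcol)
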